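/- If a nonzero right R-module M is iso-simple and injective, then M is simple. -/

import Mathlib

universe u

open MulOpposite

/-- A nonzero module is iso-simple if it is isomorphic to each of its nonzero submodules. -/
def IsIsoSimpleModule (A : Type u) [Ring A] (M : Type u) [AddCommGroup M] [Module A M] : Prop :=
  Nontrivial M ∧ ∀ N : Submodule A M, N ≠ ⊥ → Nonempty (M ≃ₗ[A] N)

/-- If a nonzero right `R`-module `M` is iso-simple and injective, then `M` is simple. -/
theorem isSimpleModule_of_isoSimple_of_injective (R : Type u) [Ring R]
    (M : Type u) [AddCommGroup M] [Module Rᵐᵒᵖ M]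
    (h1 : IsIsoSimpleModule Rᵐᵒᵖ M) (h2 : Module.Injective Rᵐᵒᵖ M) :
    IsSimpleModule Rᵐᵒᵖ M := by
  obtain ⟨hnt, hiso⟩ := h1
  -- every submodule has a complement, so M is semisimple
  have key : ∀ N : Submodule Rᵐᵒᵖ M, ∃ C, IsCompl N C := by
    intro N
    rcases eq_or_ne N ⊥ with rfl | hN
    · exact ⟨⊤, isCompl_bot_top⟩
    · obtain ⟨e⟩ := hiso N hN
      obtain ⟨h, hh⟩ := h2.out N.subtype N.injective_subtype e.symm.toLinearMap
      refine ⟨LinearMap.ker ((e : M →ₗ[Rᵐᵒᵖ] N).comp h), LinearMap.isCompl_of_proj ?_⟩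
      intro x
      have := hh x
      simp only [Submodule.coe_subtype] at this
      simp [LinearMap.comp_apply, this]
  haveI : IsSemisimpleModule Rᵐᵒᵖ M := { toComplementedLattice := ⟨key⟩ }
  obtain ⟨S, hS⟩ := IsSemisimpleModule.exists_simple_submodule Rᵐᵒᵖ M
  have hSne : S ≠ ⊥ := by
    haveI := hS
    have : Nontrivial S := IsSimpleModule.nontrivial Rᵐᵒᵖ S
    exact Submodule.nontrivial_iff_ne_bot.mp this
  obtain ⟨e⟩ := hiso S hSne
  exact IsSimpleModule.congr e
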